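/- A real-time automaton (a timed automaton with a single clock y that is reset on every transition and whose guards are finite unions of intervals of y with integer or infinite endpoints) can be determinized: for every RTA B there is a deterministic RTA B^d with L(B^d) = L(B), obtained by the subset construction where, for each subset 𝒮 and character a, one refines ℝ≥0 into the coarsest partition 𝕀_{𝒮,a} compatible with all guards of a-transitions out of states in 𝒮, and adds transitions (𝒮, a, y∈I', {y}, 𝒮') with 𝒮' = {s' | ∃s ∈ 𝒮, (s,a,y∈I'',{y},s') with I' ⊆ I''}. -/
import Mathlib


attribute [local instance] Classical.propDecidable

/-- A timed automaton: `trans s a g λ s'` means there is a transition from `s`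
to `s'` on character `a` with guard `g` (a predicate on clock valuations) and
reset set `λ`. -/
structure TA (α : Type) (σ : Type) (C : Type) where
  start : σ
  accept : Set σ
  trans : σ → α → ((C → ℝ) → Prop) → Set C → σ → Prop

namespace TA
variable {α σ C : Type}

/-- One step of a timed automaton: from configuration `c` at previous absolute
time `t`, reading the time-stamped character `p = (a,τ)` (so the dwell time is
`τ - t`), reaching configuration `c'`. -/
def step (A : TA α σ C) (t : ℝ) (c : σ × (C → ℝ)) (p : α × ℝ) (c' : σ × (C → ℝ)) : Prop :=
  ∃ g l, A.trans c.1 p.1 g l c'.1 ∧ g (fun x => c.2 x + (p.2 - t)) ∧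
    ∀ x, c'.2 x = if x ∈ l then 0 else c.2 x + (p.2 - t)

/-- `PathFrom t c w c'`: reading the timed word `w` from configuration `c`
(the previous timestamp being `t`) ends in configuration `c'`. -/
def PathFrom (A : TA α σ C) : ℝ → σ × (C → ℝ) → List (α × ℝ) → σ × (C → ℝ) → Prop
  | _, c, [], c' => c' = c
  | t, c, p :: w, c' => ∃ c₁, A.step t c p c₁ ∧ A.PathFrom p.2 c₁ w c'

/-- `RunFrom t c w cs`: `cs` is the full list of configurations visited when
reading `w` from configuration `c` (so `cs` starts with `c` and has length `|w|+1`). -/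
def RunFrom (A : TA α σ C) : ℝ → σ × (C → ℝ) → List (α × ℝ) → List (σ × (C → ℝ)) → Prop
  | _, c, [], cs => cs = [c]
  | t, c, p :: w, cs => ∃ c₁ cs', cs = c :: cs' ∧ A.step t c p c₁ ∧ A.RunFrom p.2 c₁ w cs'

end TA

/-- A timed word: positive, strictly increasing timestamps. -/
def IsTimedWord {α : Type} (w : List (α × ℝ)) : Prop :=
  (∀ p ∈ w, 0 < p.2) ∧ w.Chain' fun p q => p.2 < q.2

/-- The language of a timed automaton. -/
def TA.lang {α σ C : Type} (A : TA α σ C) : Set (List (α × ℝ)) :=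
  {w | IsTimedWord w ∧ ∃ c, A.PathFrom 0 (A.start, fun _ => 0) w c ∧ c.1 ∈ A.accept}

/-- An interval of `ℝ` with integer or infinite endpoints. -/
def IsIntInterval (I : Set ℝ) : Prop :=
  (∃ a b : ℤ, I = Set.Icc (a : ℝ) b ∨ I = Set.Ico (a : ℝ) b ∨
    I = Set.Ioc (a : ℝ) b ∨ I = Set.Ioo (a : ℝ) b) ∨
  (∃ a : ℤ, I = Set.Ici (a : ℝ) ∨ I = Set.Ioi (a : ℝ) ∨
    I = Set.Iic (a : ℝ) ∨ I = Set.Iio (a : ℝ)) ∨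
  I = Set.univ ∨ I = ∅

/-- A real-time automaton: a timed automaton with a single clock `y` that is
reset on every transition, whose guards are finite unions of intervals of `y`
with integer or infinite endpoints. -/
def IsRTA {α σ : Type} (B : TA α σ Unit) : Prop :=
  ∀ s a g l s', B.trans s a g l s' →
    l = Set.univ ∧ ∃ (n : ℕ) (f : Fin n → Set ℝ),
      (∀ i, IsIntInterval (f i)) ∧ ∀ ν : Unit → ℝ, g ν ↔ ν () ∈ ⋃ i, f i

/-- Determinism: for each configuration, character and dwell time there is
exactly one successor configuration. -/
def IsDeterministicTA {α σ C : Type} (B : TA α σ C) : Prop :=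
  ∀ (t : ℝ) (c : σ × (C → ℝ)) (p : α × ℝ), ∃! c', B.step t c p c'

namespace RTAdet

/-- Regions of `ℝ`: singletons of integers and open unit intervals. -/
def Rgn (R : Set ℝ) : Prop :=
  ∃ n : ℤ, R = Set.Icc (n : ℝ) n ∨ R = Set.Ioo (n : ℝ) ((n : ℝ) + 1)

lemma rgn_intInterval {R : Set ℝ} (hR : Rgn R) : IsIntInterval R := by
  obtain ⟨n, h | h⟩ := hR
  · exact Or.inl ⟨n, n, Or.inl h⟩
  · refine Or.inl ⟨n, n + 1, Or.inr (Or.inr (Or.inr ?_))⟩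
    rw [h]; push_cast; rfl

lemma rgn_cover (y : ℝ) : ∃ R, Rgn R ∧ y ∈ R := by
  by_cases h : (⌊y⌋ : ℝ) = y
  · exact ⟨Set.Icc (⌊y⌋ : ℝ) ⌊y⌋, ⟨⌊y⌋, Or.inl rfl⟩, Set.mem_Icc.mpr ⟨h.le, h.ge⟩⟩
  · exact ⟨Set.Ioo (⌊y⌋ : ℝ) ((⌊y⌋ : ℝ) + 1), ⟨⌊y⌋, Or.inr rfl⟩,
      lt_of_le_of_ne (Int.floor_le y) h, Int.lt_floor_add_one y⟩

lemma rgn_disjoint {R₁ R₂ : Set ℝ} (h₁ : Rgn R₁) (h₂ : Rgn R₂) {y : ℝ}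
    (hy₁ : y ∈ R₁) (hy₂ : y ∈ R₂) : R₁ = R₂ := by
  obtain ⟨n, hn | hn⟩ := h₁ <;> obtain ⟨m, hm | hm⟩ := h₂ <;> subst hn <;> subst hm <;>
    simp only [Set.mem_Icc, Set.mem_Ioo] at hy₁ hy₂
  · have : (n : ℝ) = m := by linarith [hy₁.1, hy₁.2, hy₂.1, hy₂.2]
    have : n = m := by exact_mod_cast this
    subst this; rfl
  · exfalso
    have hyn : y = (n : ℝ) := le_antisymm hy₁.2 hy₁.1
    have h1 : (m : ℝ) < n := hyn ▸ hy₂.1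
    have h2 : (n : ℝ) < m + 1 := hyn ▸ hy₂.2
    have h1' : m < n := by exact_mod_cast h1
    have h2' : n < m + 1 := by exact_mod_cast h2
    omega
  · exfalso
    have hyn : y = (m : ℝ) := le_antisymm hy₂.2 hy₂.1
    have h1 : (n : ℝ) < m := hyn ▸ hy₁.1
    have h2 : (m : ℝ) < n + 1 := hyn ▸ hy₁.2
    have h1' : n < m := by exact_mod_cast h1
    have h2' : m < n + 1 := by exact_mod_cast h2
    omega
  · have e : n = m := by
      have a1 : (n : ℝ) < (m : ℝ) + 1 := lt_trans hy₁.1 hy₂.2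
      have a1' : n < m + 1 := by exact_mod_cast a1
      have a2 : (m : ℝ) < (n : ℝ) + 1 := lt_trans hy₂.1 hy₁.2
      have a2' : m < n + 1 := by exact_mod_cast a2
      omega
    subst e; rfl

lemma cmp_le {n : ℤ} {y : ℝ} (h1 : (n : ℝ) < y) (h2 : y < (n : ℝ) + 1) (a : ℤ) :
    ((a : ℝ) ≤ y ↔ a ≤ n) := by
  constructor
  · intro h
    have : (a : ℝ) < (n : ℝ) + 1 := lt_of_le_of_lt h h2
    have : a < n + 1 := by exact_mod_cast this
    omega
  · intro h
    have : (a : ℝ) ≤ n := by exact_mod_cast h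
    linarith

lemma cmp_lt {n : ℤ} {y : ℝ} (h1 : (n : ℝ) < y) (h2 : y < (n : ℝ) + 1) (a : ℤ) :
    ((a : ℝ) < y ↔ a ≤ n) := by
  constructor
  · intro h
    have : (a : ℝ) < (n : ℝ) + 1 := lt_trans h h2
    have : a < n + 1 := by exact_mod_cast this
    omega
  · intro h
    have : (a : ℝ) ≤ n := by exact_mod_cast h
    linarith

lemma cmp_le' {n : ℤ} {y : ℝ} (h1 : (n : ℝ) < y) (h2 : y < (n : ℝ) + 1) (a : ℤ) :
    (y ≤ (a : ℝ) ↔ n < a) := by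
  constructor
  · intro h
    have : (n : ℝ) < a := lt_of_lt_of_le h1 h
    exact_mod_cast this
  · intro h
    have : (n : ℝ) + 1 ≤ a := by exact_mod_cast h
    linarith

lemma cmp_lt' {n : ℤ} {y : ℝ} (h1 : (n : ℝ) < y) (h2 : y < (n : ℝ) + 1) (a : ℤ) :
    (y < (a : ℝ) ↔ n < a) := by
  constructor
  · intro h
    have : (n : ℝ) < a := lt_trans h1 h
    exact_mod_cast this
  · intro h
    have : (n : ℝ) + 1 ≤ a := by exact_mod_cast h
    linarith

/-- Membership in an integer interval is constant on regions. -/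
lemma rgn_const {R I : Set ℝ} (hR : Rgn R) (hI : IsIntInterval I) {y₁ y₂ : ℝ}
    (h₁ : y₁ ∈ R) (h₂ : y₂ ∈ R) : y₁ ∈ I ↔ y₂ ∈ I := by
  obtain ⟨n, hn | hn⟩ := hR
  · subst hn
    simp only [Set.mem_Icc] at h₁ h₂
    have e1 : y₁ = (n : ℝ) := le_antisymm h₁.2 h₁.1
    have e2 : y₂ = (n : ℝ) := le_antisymm h₂.2 h₂.1
    rw [e1, e2]
  · subst hn
    simp only [Set.mem_Ioo] at h₁ h₂
    obtain ⟨h1a, h1b⟩ := h₁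
    obtain ⟨h2a, h2b⟩ := h₂
    rcases hI with ⟨a, b, h | h | h | h⟩ | ⟨a, h | h | h | h⟩ | h | h <;> subst h <;>
      simp only [Set.mem_Icc, Set.mem_Ico, Set.mem_Ioc, Set.mem_Ioo, Set.mem_Ici,
        Set.mem_Ioi, Set.mem_Iic, Set.mem_Iio, Set.mem_univ, Set.mem_empty_iff_false,
        cmp_le h1a h1b, cmp_lt h1a h1b, cmp_le' h1a h1b, cmp_lt' h1a h1b,
        cmp_le h2a h2b, cmp_lt h2a h2b, cmp_le' h2a h2b, cmp_lt' h2a h2b]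

variable {α σ : Type} (B : TA α σ Unit)

/-- Successor set of `S` on character `a` with dwell time `d`. -/
def succB (S : Set σ) (a : α) (d : ℝ) : Set σ :=
  {s' | ∃ s g l, s ∈ S ∧ B.trans s a g l s' ∧ g (fun _ => d)}

lemma succB_const (hB : IsRTA B) {R : Set ℝ} (hR : Rgn R) {d₁ d₂ : ℝ}
    (h₁ : d₁ ∈ R) (h₂ : d₂ ∈ R) (S : Set σ) (a : α) :
    succB B S a d₁ = succB B S a d₂ := by
  have key : ∀ d d' : ℝ, d ∈ R → d' ∈ R → ∀ s', s' ∈ succB B S a d → s' ∈ succB B S a d' := by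
    intro d d' hd hd' s' ⟨s, g, l, hsS, htr, hg⟩
    refine ⟨s, g, l, hsS, htr, ?_⟩
    obtain ⟨-, nn, f, hf, hiff⟩ := hB s a g l s' htr
    rw [hiff] at hg ⊢
    simp only [Set.mem_iUnion] at hg ⊢
    obtain ⟨i, hi⟩ := hg
    exact ⟨i, (rgn_const hR (hf i) hd hd').mp hi⟩
  exact Set.Subset.antisymm (fun s' h => key d₁ d₂ h₁ h₂ s' h) (fun s' h => key d₂ d₁ h₂ h₁ s' h)

/-- The determinized automaton. -/
def detTA : TA α (Set σ) Unit where
  start := {B.start}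
  accept := {S | ∃ s ∈ S, s ∈ B.accept}
  trans := fun S a g l T =>
    ∃ R d, Rgn R ∧ d ∈ R ∧ (g = fun ν => ν () ∈ R) ∧ l = Set.univ ∧ T = succB B S a d

lemma detTA_isRTA : IsRTA (detTA B) := by
  rintro S a g l T ⟨R, d, hR, hd, hg, hl, hT⟩
  refine ⟨hl, 1, fun _ => R, fun _ => rgn_intInterval hR, fun ν => ?_⟩
  rw [hg, Set.iUnion_const]

lemma detTA_step_iff (hB : IsRTA B) (t : ℝ) (S : Set σ) (p : α × ℝ)
    (c' : Set σ × (Unit → ℝ)) :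
    (detTA B).step t (S, fun _ => 0) p c' ↔
      c' = (succB B S p.1 (p.2 - t), fun _ => 0) := by
  constructor
  · rintro ⟨g, l, ⟨R, d, hR, hd, hg, hl, hT⟩, hgv, hres⟩
    subst hg
    have hv : p.2 - t ∈ R := by simpa using hgv
    have hT' : c'.1 = succB B S p.1 (p.2 - t) :=
      hT.trans (succB_const B hB hR hd hv S p.1)
    have hval : c'.2 = fun _ => 0 := by
      funext x
      rw [hres x, hl]
      simp
    exact Prod.ext hT' hval
  · rintro rfl
    obtain ⟨R, hR, hv⟩ := rgn_cover (p.2 - t)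
    refine ⟨fun ν => ν () ∈ R, Set.univ, ⟨R, p.2 - t, hR, hv, rfl, rfl, rfl⟩, by simpa using hv,
      fun x => by simp⟩

lemma detTA_det (hB : IsRTA B) : IsDeterministicTA (detTA B) := by
  intro t c p
  have hstep : ∀ c', (detTA B).step t c p c' ↔
      c' = (succB B c.1 p.1 (c.2 () + (p.2 - t)), fun _ => 0) := by
    intro c'
    constructor
    · rintro ⟨g, l, ⟨R, d, hR, hd, hg, hl, hT⟩, hgv, hres⟩
      subst hg
      have hv : c.2 () + (p.2 - t) ∈ R := hgv
      have hT' : c'.1 = succB B c.1 p.1 (c.2 () + (p.2 - t)) :=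
        hT.trans (succB_const B hB hR hd hv c.1 p.1)
      have hval : c'.2 = fun _ => 0 := by
        funext x
        rw [hres x, hl]
        simp
      exact Prod.ext hT' hval
    · rintro rfl
      obtain ⟨R, hR, hv⟩ := rgn_cover (c.2 () + (p.2 - t))
      exact ⟨fun ν => ν () ∈ R, Set.univ, ⟨R, _, hR, hv, rfl, rfl, rfl⟩, hv, fun x => by simp⟩
  refine ⟨(succB B c.1 p.1 (c.2 () + (p.2 - t)), fun _ => 0), (hstep _).mpr rfl, ?_⟩
  intro c' h
  exact (hstep c').mp h

/-- Reachable set of states after reading `w` from `S` at time `t`. -/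
def Rch : ℝ → Set σ → List (α × ℝ) → Set σ
  | _, S, [] => S
  | t, S, p :: w => Rch p.2 (succB B S p.1 (p.2 - t)) w

lemma detTA_path (hB : IsRTA B) :
    ∀ (w : List (α × ℝ)) (t : ℝ) (S : Set σ) (c' : Set σ × (Unit → ℝ)),
      (detTA B).PathFrom t (S, fun _ => 0) w c' ↔ c' = (Rch B t S w, fun _ => 0) := by
  intro w
  induction w with
  | nil => intro t S c'; simp [TA.PathFrom, Rch]
  | cons p w ih =>
    intro t S c'
    constructor
    · rintro ⟨c₁, hs, hp⟩
      rw [detTA_step_iff B hB] at hs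
      subst hs
      exact (ih p.2 _ c').mp hp
    · rintro rfl
      exact ⟨(succB B S p.1 (p.2 - t), fun _ => 0), (detTA_step_iff B hB t S p _).mpr rfl,
        (ih p.2 _ _).mpr rfl⟩

lemma B_path (hB : IsRTA B) :
    ∀ (w : List (α × ℝ)) (t : ℝ) (S : Set σ) (s' : σ),
      s' ∈ Rch B t S w ↔ ∃ s ∈ S, ∃ u, B.PathFrom t (s, fun _ => 0) w (s', u) := by
  intro w
  induction w with
  | nil =>
    intro t S s'
    constructor
    · intro h
      exact ⟨s', h, fun _ => 0, rfl⟩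
    · rintro ⟨s, hs, u, h⟩
      have : s' = s := congrArg Prod.fst (h : ((s', u) : σ × (Unit → ℝ)) = (s, fun _ => 0))
      rw [this]; exact hs
  | cons p w ih =>
    intro t S s'
    show s' ∈ Rch B p.2 (succB B S p.1 (p.2 - t)) w ↔ _
    rw [ih]
    constructor
    · rintro ⟨s₁, ⟨s, g, l, hsS, htr, hg⟩, u, hpath⟩
      have hl : l = Set.univ := (hB s p.1 g l s₁ htr).1
      refine ⟨s, hsS, u, (s₁, fun _ => 0), ⟨g, l, htr, ?_, ?_⟩, hpath⟩
      · simpa using hg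
      · intro x; rw [hl]; simp
    · rintro ⟨s, hsS, u, c₁, ⟨g, l, htr, hg, hres⟩, hpath⟩
      have hl : l = Set.univ := (hB s p.1 g l c₁.1 htr).1
      have hval : c₁.2 = fun _ => 0 := by
        funext x; rw [hres x, hl]; simp
      have hc₁ : c₁ = (c₁.1, fun _ => 0) := Prod.ext rfl hval
      rw [hc₁] at hpath
      refine ⟨c₁.1, ⟨s, g, l, hsS, htr, ?_⟩, u, hpath⟩
      simpa using hg

end RTAdet

/-- every real-time automaton can be determinized (by the subset
construction refining guards): there is a deterministic RTA on the powerset of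
the states with the same language. -/
theorem rta_determinization {α σ : Type} (B : TA α σ Unit) (hB : IsRTA B) :
    ∃ B' : TA α (Set σ) Unit,
      IsRTA B' ∧ IsDeterministicTA B' ∧ B'.lang = B.lang := by
  refine ⟨RTAdet.detTA B, RTAdet.detTA_isRTA B, RTAdet.detTA_det B hB, ?_⟩
  ext w
  simp only [TA.lang, Set.mem_setOf_eq]
  constructor
  · rintro ⟨htw, c', hpath, hacc⟩
    have := (RTAdet.detTA_path B hB w 0 {B.start} c').mp hpath
    subst this
    obtain ⟨s, hsR, hsa⟩ := hacc
    obtain ⟨s₀, hs₀, u, hp⟩ := (RTAdet.B_path B hB w 0 {B.start} s).mp hsR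
    have : s₀ = B.start := hs₀
    subst this
    exact ⟨htw, (s, u), hp, hsa⟩
  · rintro ⟨htw, c, hpath, hacc⟩
    refine ⟨htw, (RTAdet.Rch B 0 {B.start} w, fun _ => 0),
      (RTAdet.detTA_path B hB w 0 {B.start} _).mpr rfl, ?_⟩
    exact ⟨c.1, (RTAdet.B_path B hB w 0 {B.start} c.1).mpr
      ⟨B.start, rfl, c.2, hpath⟩, hacc⟩
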